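/- Fix R_S > 0 and for n ≥ 2 define μ_n = −1/R_S + (I₀(R_S)/(R_S² I₁(R_S))) · [(n²−1) I_n'(R_S)/I_n(R_S)] / [I_n'(R_S)/I_n(R_S) − I₁'(R_S)/I₁(R_S)]. Assuming the inequalities I_{n+1}'(r)/I_{n+1}(r) > I_n'(r)/I_n(r) for n ≥ 0 and (1/(n²−1))(I_n'(r)/I_n(r) − I₁'(r)/I₁(r)) > (1/((n+1)²−1))(I_{n+1}'(r)/I_{n+1}(r) − I₁'(r)/I₁(r)) for n ≥ 2, prove μ_{n+1} > μ_n for all n ≥ 2. -/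

import Mathlib

/-- Modified Bessel function of the first kind of integer order. -/
noncomputable def besselI (n : ℕ) (r : ℝ) : ℝ :=
  ∑' k : ℕ, (r / 2) ^ (n + 2 * k) / ((Nat.factorial k : ℝ) * (Nat.factorial (n + k) : ℝ))

/-- The bifurcation values μ_n for the modified Hele-Shaw problem. -/
noncomputable def muBif (R_S : ℝ) (n : ℕ) : ℝ :=
  -1 / R_S + (besselI 0 R_S / (R_S ^ 2 * besselI 1 R_S)) *
    (((n : ℝ) ^ 2 - 1) * deriv (besselI n) R_S / besselI n R_S) /
    (deriv (besselI n) R_S / besselI n R_S - deriv (besselI 1) R_S / besselI 1 R_S)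

lemma summable_besselI (n : ℕ) (r : ℝ) :
    Summable (fun k : ℕ => (r / 2) ^ (n + 2 * k) / ((Nat.factorial k : ℝ) * (Nat.factorial (n + k) : ℝ))) := by
  have hg : Summable (fun k : ℕ => |r/2|^n * ((|r/2|^2)^k / (Nat.factorial k : ℝ))) :=
    (Real.summable_pow_div_factorial (|r/2|^2)).mul_left _
  apply Summable.of_norm
  refine Summable.of_nonneg_of_le (fun k => norm_nonneg _) (fun k => ?_) hg
  have h1 : (1:ℝ) ≤ (Nat.factorial (n+k) : ℝ) := by
    exact_mod_cast Nat.one_le_iff_ne_zero.mpr (Nat.factorial_ne_zero _)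
  have hk : (0:ℝ) < (Nat.factorial k : ℝ) := by exact_mod_cast Nat.factorial_pos k
  have heq : ‖(r / 2) ^ (n + 2 * k) / ((Nat.factorial k : ℝ) * (Nat.factorial (n + k) : ℝ))‖
      = |r/2|^(n+2*k) / ((Nat.factorial k : ℝ) * (Nat.factorial (n + k) : ℝ)) := by
    rw [Real.norm_eq_abs, abs_div, abs_pow]
    congr 1
    rw [abs_of_pos (by positivity)]
  rw [heq, pow_add, pow_mul, mul_div_assoc]
  refine mul_le_mul_of_nonneg_left ?_ (by positivity)
  apply div_le_div_of_nonneg_left (by positivity) hk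
  nlinarith [hk, h1]

lemma besselI_pos (n : ℕ) {r : ℝ} (hr : 0 < r) : 0 < besselI n r := by
  have hs := summable_besselI n r
  refine Summable.tsum_pos hs (fun k => by positivity) 0 (by positivity)

lemma besselI_one_monotone : Monotone (besselI 1) := by
  intro a b hab
  refine Summable.tsum_le_tsum (fun k => ?_) (summable_besselI 1 a) (summable_besselI 1 b)
  have hodd : Odd (1 + 2 * k) := ⟨k, by ring⟩
  have := hodd.strictMono_pow (R := ℝ)
  gcongr ?_ / _
  exact (hodd.strictMono_pow (R := ℝ)).monotone (by linarith)

lemma deriv_besselI_one_nonneg (x : ℝ) : 0 ≤ deriv (besselI 1) x := by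
  by_cases hd : DifferentiableAt ℝ (besselI 1) x
  · have h := hd.hasDerivAt
    rw [hasDerivAt_iff_tendsto_slope] at h
    have h2 : Filter.Tendsto (slope (besselI 1) x) (nhdsWithin x (Set.Ioi x)) (nhds (deriv (besselI 1) x)) :=
      h.mono_left (nhdsWithin_mono x (fun y hy => ne_of_gt hy))
    refine ge_of_tendsto h2 ?_
    filter_upwards [self_mem_nhdsWithin] with y hy
    have : (0:ℝ) < y - x := by simpa using sub_pos.mpr (Set.mem_Ioi.mp hy)
    have hmono := besselI_one_monotone (le_of_lt (Set.mem_Ioi.mp hy))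
    rw [slope_def_field]
    exact div_nonneg (by linarith) this.le
  · simp [deriv_zero_of_not_differentiableAt hd]

lemma muBif_aux (C a b d1 Dn In Dm Im : ℝ)
    (hC : 0 < C) (hd1 : 0 ≤ d1)
    (hu : d1 < Dn / In) (hv : d1 < Dm / Im)
    (ha : 0 < a) (hb : a < b)
    (h7 : (1/b) * (Dm/Im - d1) < (1/a) * (Dn/In - d1)) :
    C * (a * Dn / In) / (Dn/In - d1) < C * (b * Dm / Im) / (Dm/Im - d1) := by
  have e1 : a * Dn / In = a * (Dn/In) := mul_div_assoc a Dn In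
  have e2 : b * Dm / Im = b * (Dm/Im) := mul_div_assoc b Dm Im
  rw [e1, e2]
  set dn := Dn / In with hdn
  set dm := Dm / Im with hdm
  have hu' : 0 < dn - d1 := sub_pos.mpr hu
  have hv' : 0 < dm - d1 := sub_pos.mpr hv
  have hb0 : 0 < b := lt_trans ha hb
  rw [one_div_mul_eq_div, one_div_mul_eq_div, div_lt_div_iff₀ hb0 ha] at h7
  rw [div_lt_div_iff₀ hu' hv']
  nlinarith [mul_pos hC (mul_pos hu' hv'), mul_nonneg (mul_nonneg hC.le hd1)
    (by nlinarith : (0:ℝ) ≤ (dn - d1) * b - (dm - d1) * a)]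


theorem muBif_strictMono (R_S : ℝ) (hR : 0 < R_S)
    (hA1 : ∀ n : ℕ, ∀ r : ℝ, 0 < r →
      deriv (besselI (n + 1)) r / besselI (n + 1) r > deriv (besselI n) r / besselI n r)
    (hA7 : ∀ n : ℕ, 2 ≤ n → ∀ r : ℝ, 0 < r →
      (1 / ((n : ℝ) ^ 2 - 1)) * (deriv (besselI n) r / besselI n r
          - deriv (besselI 1) r / besselI 1 r)
        > (1 / (((n : ℝ) + 1) ^ 2 - 1)) * (deriv (besselI (n + 1)) r / besselI (n + 1) r
          - deriv (besselI 1) r / besselI 1 r)) :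
    ∀ n : ℕ, 2 ≤ n → muBif R_S (n + 1) > muBif R_S n := by
  intro n hn
  have hd1 : 0 ≤ deriv (besselI 1) R_S / besselI 1 R_S :=
    div_nonneg (deriv_besselI_one_nonneg R_S) (besselI_pos 1 hR).le
  have hchain : ∀ k : ℕ, 2 ≤ k →
      deriv (besselI 1) R_S / besselI 1 R_S < deriv (besselI k) R_S / besselI k R_S := by
    intro k hk
    induction k, hk using Nat.le_induction with
    | base => exact hA1 1 R_S hR
    | succ k hk ih => exact lt_trans ih (hA1 k R_S hR)
  have hC : 0 < besselI 0 R_S / (R_S ^ 2 * besselI 1 R_S) :=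
    div_pos (besselI_pos 0 hR) (mul_pos (pow_pos hR 2) (besselI_pos 1 hR))
  have hn2 : (2:ℝ) ≤ (n:ℝ) := by exact_mod_cast hn
  have key := muBif_aux (besselI 0 R_S / (R_S ^ 2 * besselI 1 R_S))
    ((n:ℝ)^2 - 1) (((n:ℝ)+1)^2 - 1) (deriv (besselI 1) R_S / besselI 1 R_S)
    (deriv (besselI n) R_S) (besselI n R_S)
    (deriv (besselI (n+1)) R_S) (besselI (n+1) R_S)
    hC hd1 (hchain n hn) (hchain (n+1) (by omega))
    (by nlinarith) (by nlinarith) (hA7 n hn R_S hR)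
  unfold muBif
  push_cast
  linarith [key]
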